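/- Let σ be a sequence of channel actions over Σ and x a word, and suppose L ∈ ℕ and ℓ ≤ L satisfy pr[σ^ℓ](x) ⊑ pr[σ^{L+1}](x). Then for every k ∈ ℕ there exists i ≤ L with pr[σ^i](x) ⊑ pr[σ^k](x); consequently the union over all k ∈ ℕ of the upward closures of pr[σ^k](x) equals the finite union over i ≤ L of the upward closures of pr[σ^i](x). -/

import Mathlib

open List
/-- `wpow u k` is the word `u` concatenated `k` times. -/
def wpow {β : Type*} (u : List β) (k : ℕ) : List β := (List.replicate k u).flatten

/-- Auxiliary residual operation, working on reversed words. -/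
def resAux {α : Type*} [DecidableEq α] : List α → List α → List α
  | xr, [] => xr
  | [], _ :: _ => []
  | a :: xr, b :: vr => if a = b then resAux xr vr else resAux (a :: xr) vr
termination_by xr vr => vr.length

/-- The residual `x / v`: the prefix of `x` obtained by removing from `x`
its longest suffix that is a subword of `v`. -/
def res {α : Type*} [DecidableEq α] (x v : List α) : List α :=
  (resAux x.reverse v.reverse).reverse

inductive Act (α : Type*) where
  | write : List α → Act α
  | read : List α → Act α

/-- written part -/
def wri {α : Type*} : List (Act α) → List α
  | [] => []
  | Act.write w :: σ => w ++ wri σ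
  | Act.read _ :: σ => wri σ

/-- read part -/
def rea {α : Type*} : List (Act α) → List α
  | [] => []
  | Act.write _ :: σ => rea σ
  | Act.read w :: σ => w ++ rea σ

/-- `pr σ x` : minimal `σ`-predecessor of `x` (processing `σ` right-to-left). -/
def pr {α : Type*} [DecidableEq α] : List (Act α) → List α → List α
  | [], x => x
  | Act.write v :: σ, x => res (pr σ x) v
  | Act.read u :: σ, x => u ++ pr σ x

/-- lossy step for a single channel action -/
def stepAct {α : Type*} : Act α → List α → List α → Prop
  | Act.write w, x, y => y <+ x ++ w
  | Act.read w, x, y => w ++ y <+ x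

/-- lossy steps along a sequence of channel actions -/
def steps {α : Type*} : List (Act α) → List α → List α → Prop
  | [], x, y => x = y
  | θ :: σ, x, y => ∃ z, stepAct θ x z ∧ steps σ z y

/-- `w` is a fractional power of `u` -/
def FracPow {α : Type*} (u w : List α) : Prop := ∃ k : ℕ, w <+: wpow u k

/-- `x ⊖ u` : remainder of `x` after reading the leftmost embedding of `u`. -/
def ominus {α : Type*} [DecidableEq α] : List α → List α → List α
  | x, [] => x
  | [], _ :: _ => []
  | a :: x, b :: u => if a = b then ominus x u else ominus x (b :: u)

/-- `σ` is increasing -/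
def Increasing {α : Type*} (σ : List (Act α)) : Prop :=
  0 < (wri σ).length ∧
    wpow (rea σ) (wri σ).length <+ wpow (wri σ) ((wri σ).length - 1)


lemma resAux_mono {α : Type*} [DecidableEq α] :
    ∀ (vr xr xr' : List α), xr <+ xr' → resAux xr vr <+ resAux xr' vr := by
  intro vr
  induction vr with
  | nil => intro xr xr' h; simpa [resAux] using h
  | cons b vr ih =>
    intro xr xr' h
    cases xr with
    | nil => simp [resAux]
    | cons a t =>
      cases h with
      | @cons _ t' a' h =>
        show resAux (a :: t) (b :: vr) <+ resAux (a' :: t') (b :: vr)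
        simp only [resAux]
        by_cases hab : a = b <;> by_cases ha'b : a' = b <;> simp [hab, ha'b]
        · exact ih _ _ (((List.sublist_cons_self a t).trans h))
        · exact ih _ _ (((List.sublist_cons_self a t).trans h).trans
            (List.sublist_cons_self a' t'))
        · exact ih _ _ h
        · exact ih _ _ (h.trans (List.sublist_cons_self a' t'))
      | @cons_cons _ t' _ h =>
        show resAux (a :: t) (b :: vr) <+ resAux (a :: t') (b :: vr)
        simp only [resAux]
        by_cases hab : a = b <;> simp [hab]
        · exact ih _ _ h
        · exact ih _ _ (List.cons_sublist_cons.mpr h)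

lemma res_mono {α : Type*} [DecidableEq α] {x x' : List α} (v : List α) (h : x <+ x') :
    res x v <+ res x' v := by
  simpa [res] using (resAux_mono v.reverse _ _ (h.reverse)).reverse

lemma pr_mono {α : Type*} [DecidableEq α] (σ : List (Act α)) {y y' : List α} (h : y <+ y') :
    pr σ y <+ pr σ y' := by
  induction σ with
  | nil => exact h
  | cons θ σ ih =>
    cases θ with
    | write v => exact res_mono v ih
    | read u => exact ih.append_left u

lemma pr_append {α : Type*} [DecidableEq α] (σ₁ σ₂ : List (Act α)) (x : List α) :
    pr (σ₁ ++ σ₂) x = pr σ₁ (pr σ₂ x) := by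
  induction σ₁ with
  | nil => rfl
  | cons θ σ ih => cases θ <;> simp [pr, ih]

lemma wpow_succ {β : Type*} (u : List β) (k : ℕ) : wpow u (k + 1) = u ++ wpow u k := by
  simp [wpow, List.replicate_succ]

lemma pr_wpow_succ {α : Type*} [DecidableEq α] (σ : List (Act α)) (k : ℕ) (x : List α) :
    pr (wpow σ (k + 1)) x = pr σ (pr (wpow σ k) x) := by
  rw [wpow_succ, pr_append]

/-- if `pr[σ^ℓ](x) ⊑ pr[σ^{L+1}](x)` for some `ℓ ≤ L`, then every
`pr[σ^k](x)` is above some `pr[σ^i](x)` with `i ≤ L`, and the union of the upward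
closures of the `pr[σ^k](x)` equals the finite union over `i ≤ L`. -/
theorem fixpoint_after_L {α : Type*} [DecidableEq α]
    (σ : List (Act α)) (x : List α) (L ℓ : ℕ) (hl : ℓ ≤ L)
    (h : pr (wpow σ ℓ) x <+ pr (wpow σ (L + 1)) x) :
    (∀ k : ℕ, ∃ i ≤ L, pr (wpow σ i) x <+ pr (wpow σ k) x) ∧
    (⋃ k : ℕ, {y : List α | pr (wpow σ k) x <+ y}) =
      ⋃ i ≤ L, {y : List α | pr (wpow σ i) x <+ y} := by
  have shift : ∀ j : ℕ, pr (wpow σ (ℓ + j)) x <+ pr (wpow σ (L + 1 + j)) x := by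
    intro j
    induction j with
    | zero => simpa using h
    | succ j ih =>
      have : ℓ + (j + 1) = (ℓ + j) + 1 := by omega
      rw [this, pr_wpow_succ, show L + 1 + (j + 1) = (L + 1 + j) + 1 from by omega,
        pr_wpow_succ]
      exact pr_mono σ ih
  have key : ∀ k : ℕ, ∃ i ≤ L, pr (wpow σ i) x <+ pr (wpow σ k) x := by
    intro k
    induction k using Nat.strong_induction_on with
    | _ k ih =>
      by_cases hk : k ≤ L
      · exact ⟨k, hk, List.Sublist.refl _⟩
      · obtain ⟨j, rfl⟩ : ∃ j, k = L + 1 + j := ⟨k - (L + 1), by omega⟩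
        obtain ⟨i, hi, hsub⟩ := ih (ℓ + j) (by omega)
        exact ⟨i, hi, hsub.trans (shift j)⟩
  refine ⟨key, ?_⟩
  ext y
  simp only [Set.mem_iUnion, Set.mem_setOf_eq]
  constructor
  · rintro ⟨k, hk⟩
    obtain ⟨i, hi, hsub⟩ := key k
    exact ⟨i, hi, hsub.trans hk⟩
  · rintro ⟨i, _, hi⟩
    exact ⟨i, hi⟩
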